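/- Let F be a field of characteristic different from 2, let k ≥ 2 be an integer, and suppose there exists ω ∈ F with ω^k = 1 and ω ≠ 1. Then every F-linear endomorphism of ℕ →₀ F is a sum of fourteen (k+1)-potent F-linear endomorphisms of ℕ →₀ F. -/

import Mathlib

namespace SumFourteenAux

open Finsupp

def f1 (n : ℕ) : ℕ := if n % 2 = 0 then n + 1 else n - 1
def f2 (n : ℕ) : ℕ := if n = 0 then 0 else if n % 2 = 0 then n - 1 else n + 1

lemma f1_even {n : ℕ} (h : n % 2 = 0) : f1 n = n + 1 := if_pos h
lemma f1_odd {n : ℕ} (h : n % 2 = 1) : f1 n = n - 1 := if_neg (by omega)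
lemma f2_even {n : ℕ} (h : n ≠ 0) (h2 : n % 2 = 0) : f2 n = n - 1 := by
  unfold f2; rw [if_neg h, if_pos h2]
lemma f2_odd {n : ℕ} (h2 : n % 2 = 1) : f2 n = n + 1 := by
  unfold f2; rw [if_neg (by omega), if_neg (by omega)]

lemma f1_invol (n : ℕ) : f1 (f1 n) = n := by
  rcases Nat.even_or_odd n with ⟨l, rfl⟩ | ⟨l, rfl⟩
  · rw [f1_even (n := l + l) (by omega), f1_odd (n := l + l + 1) (by omega)]
    omega
  · rw [f1_odd (n := 2 * l + 1) (by omega)]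
    rw [show 2 * l + 1 - 1 = 2 * l by omega, f1_even (n := 2 * l) (by omega)]
lemma f2_invol (n : ℕ) : f2 (f2 n) = n := by
  rcases Nat.even_or_odd n with ⟨l, rfl⟩ | ⟨l, rfl⟩
  · rcases Nat.eq_zero_or_pos (l + l) with h | h
    · rw [h]; rfl
    · rw [f2_even (n := l + l) (by omega) (by omega),
        f2_odd (n := l + l - 1) (by omega)]
      omega
  · rw [f2_odd (n := 2 * l + 1) (by omega),
      f2_even (n := 2 * l + 1 + 1) (by omega) (by omega)]
    omega
lemma f2_zero : f2 0 = 0 := rfl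
lemma f2_succ_ne (n : ℕ) : f2 (n+1) ≠ 0 := by
  rcases Nat.even_or_odd (n+1) with ⟨l, h⟩ | ⟨l, h⟩
  · rw [h, f2_even (n := l + l) (by omega) (by omega)]; omega
  · rw [h, f2_odd (n := 2 * l + 1) (by omega)]; omega

lemma f1_parity (n : ℕ) : (f1 n + n) % 2 = 1 := by
  rcases Nat.even_or_odd n with ⟨l, h⟩ | ⟨l, h⟩
  · rw [h, f1_even (n := l + l) (by omega)]; omega
  · rw [h, f1_odd (n := 2 * l + 1) (by omega)]; omega

lemma f2_parity (n : ℕ) : (f2 (n+1) + (n+1)) % 2 = 1 := by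
  rcases Nat.even_or_odd (n+1) with ⟨l, h⟩ | ⟨l, h⟩
  · rw [h, f2_even (n := l + l) (by omega) (by omega)]; omega
  · rw [h, f2_odd (n := 2 * l + 1) (by omega)]; omega

section Ops

variable (F : Type*) [Field F] (M : Type*) [AddCommGroup M] [Module F M]

noncomputable def swop (f : ℕ → ℕ) : Module.End F (ℕ →₀ M) := lmapDomain M F f
noncomputable def sgop : Module.End F (ℕ →₀ M) := (lsum F) fun n => ((-1:F)^n) • lsingle n
noncomputable def pzop : Module.End F (ℕ →₀ M) := (lsingle 0).comp (lapply 0)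

variable {F M}

lemma swop_single (f : ℕ → ℕ) (n : ℕ) (m : M) :
    swop F M f (single n m) = single (f n) m := by
  simp [swop, lmapDomain_apply, mapDomain_single]

lemma sgop_single (n : ℕ) (m : M) :
    sgop F M (single n m) = ((-1:F)^n) • single n m := by
  simp [sgop, lsum_single]

lemma pzop_single (n : ℕ) (m : M) :
    pzop F M (single n m) = if n = 0 then single 0 m else 0 := by
  simp only [pzop, LinearMap.comp_apply, lapply_apply, lsingle_apply, Finsupp.single_apply]
  split_ifs with h
  · subst h; simp
  · simp [Ne.symm h]

lemma pzop_apply (v : ℕ →₀ M) : pzop F M v = single 0 (v 0) := rfl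

lemma neg_one_pow_parity {a b : ℕ} (h : (a + b) % 2 = 1) : ((-1:F))^a = -((-1:F))^b := by
  rcases Nat.even_or_odd a with ha | ha
  · have hb : Odd b := by rcases ha with ⟨l, hl⟩; exact ⟨(a+b)/2 - l, by omega⟩
    rw [Even.neg_one_pow ha, Odd.neg_one_pow hb, neg_neg]
  · have hb : Even b := by rcases ha with ⟨l, hl⟩; exact ⟨(a+b)/2 - l, by omega⟩
    rw [Odd.neg_one_pow ha, Even.neg_one_pow hb]

lemma swop_invol {f : ℕ → ℕ} (hf : ∀ n, f (f n) = n) :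
    swop F M f * swop F M f = 1 := by
  apply lhom_ext; intro n m
  simp [Module.End.mul_apply, swop_single, hf]

lemma sgop_invol : sgop F M * sgop F M = 1 := by
  apply lhom_ext; intro n m
  simp [Module.End.mul_apply, sgop_single, map_smul, smul_smul, ← mul_pow]

lemma sw1_sg_anti : swop F M f1 * sgop F M = -(sgop F M * swop F M f1) := by
  apply lhom_ext; intro n m
  have hp : ((-1:F))^(f1 n) = -((-1:F))^n := neg_one_pow_parity (f1_parity n)
  simp [Module.End.mul_apply, sgop_single, swop_single, map_smul, hp]

lemma sw2_pzsg_anti :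
    swop F M f2 * (pzop F M - sgop F M) = -((pzop F M - sgop F M) * swop F M f2) := by
  apply lhom_ext; intro n m
  cases n with
  | zero =>
      simp [Module.End.mul_apply, LinearMap.sub_apply, pzop_single, sgop_single,
        swop_single, f2_zero]
  | succ n =>
      have h1 : f2 (n+1) ≠ 0 := f2_succ_ne n
      have hp : ((-1:F))^(f2 (n+1)) = -((-1:F))^(n+1) := neg_one_pow_parity (f2_parity n)
      simp [Module.End.mul_apply, LinearMap.sub_apply, pzop_single, sgop_single,
        swop_single, map_smul, h1, hp]

end Ops

def phiFun : ℕ × ℕ → ℕ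
  | (0, j) => 2 * j + 1
  | (n+1, j) => 2 * Nat.pair n j

def phiInv (m : ℕ) : ℕ × ℕ :=
  if m % 2 = 1 then (0, m / 2) else ((Nat.unpair (m / 2)).1 + 1, (Nat.unpair (m / 2)).2)

lemma phi_left (p : ℕ × ℕ) : phiInv (phiFun p) = p := by
  rcases p with ⟨n, j⟩
  cases n with
  | zero =>
      show phiInv (2 * j + 1) = (0, j)
      unfold phiInv
      rw [if_pos (by omega)]
      simp; omega
  | succ n =>
      show phiInv (2 * Nat.pair n j) = (n+1, j)
      unfold phiInv
      rw [if_neg (by omega)]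
      have h : 2 * Nat.pair n j / 2 = Nat.pair n j := by omega
      rw [h, Nat.unpair_pair]

lemma phi_right (m : ℕ) : phiFun (phiInv m) = m := by
  unfold phiInv
  rcases Nat.even_or_odd m with ⟨l, hl⟩ | ⟨l, hl⟩
  · rw [if_neg (by omega)]
    show 2 * Nat.pair (Nat.unpair (m / 2)).1 (Nat.unpair (m / 2)).2 = m
    rw [Nat.pair_unpair]; omega
  · rw [if_pos (by omega)]
    show 2 * (m / 2) + 1 = m
    omega

def phi : ℕ × ℕ ≃ ℕ := ⟨phiFun, phiInv, phi_left, phi_right⟩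

lemma phi_zero (j : ℕ) : phi (0, j) = 2 * j + 1 := rfl
lemma phi_succ (n j : ℕ) : phi (n+1, j) = 2 * Nat.pair n j := rfl

section RingPart

variable {F : Type*} [Field F] {R : Type*} [Ring R] [Algebra F R]

lemma idem_pow {z : R} (h : z * z = z) (n : ℕ) : z ^ (n + 1) = z := by
  induction n with
  | zero => rw [pow_one]
  | succ n ih => rw [pow_succ, ih, h]

lemma pair_idem (h2 : (2:F) ≠ 0) (s H : R) (hs : s * s = 1)
    (ha0 : s * H + H * s = 0) :
    ∃ z₁ z₂ : R, z₁ * z₁ = z₁ ∧ z₂ * z₂ = z₂ ∧ z₁ + z₂ = 1 + H := by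
  have ha : s * H = -(H * s) := eq_neg_of_add_eq_zero_left ha0
  set c : F := 2⁻¹ with hc
  have hc2 : c * 2 = 1 := inv_mul_cancel₀ h2
  set e : R := c • (1 + s) with he
  set f : R := c • (1 - s) with hfdef
  have hef1 : e + f = 1 := by
    rw [he, hfdef, ← smul_add]
    have h1 : (1 + s) + (1 - s) = (2:F) • (1:R) := by rw [two_smul]; abel
    rw [h1, smul_smul, hc2, one_smul]
  have hee : e * e = e := by
    have h1 : (1 + s) * (1 + s) = (2:F) • (1 + s) := by
      have e1 : (1 + s) * (1 + s) = 1 + s + s + s * s := by noncomm_ring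
      have e2 : (2:F) • (1 + s) = (1 + s) + (1 + s) := two_smul F _
      rw [e1, hs, e2]; abel
    rw [he, smul_mul_assoc, mul_smul_comm, h1, smul_smul, smul_smul,
      show c * c * 2 = c by rw [mul_assoc, hc2, mul_one]]
  have hff : f * f = f := by
    have h1 : (1 - s) * (1 - s) = (2:F) • (1 - s) := by
      have e1 : (1 - s) * (1 - s) = 1 - s - s + s * s := by noncomm_ring
      have e2 : (2:F) • (1 - s) = (1 - s) + (1 - s) := two_smul F _
      rw [e1, hs, e2]; abel
    rw [hfdef, smul_mul_assoc, mul_smul_comm, h1, smul_smul, smul_smul,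
      show c * c * 2 = c by rw [mul_assoc, hc2, mul_one]]
  have hf1 : f = 1 - e := by rw [← hef1]; abel
  have hef : e * f = 0 := by
    rw [hf1, mul_sub, mul_one, hee, sub_self]
  have hfe : f * e = 0 := by
    rw [hf1, sub_mul, one_mul, hee, sub_self]
  have hsneg : s * (H * s) = -H := by
    rw [← mul_assoc, ha, neg_mul, mul_assoc, hs, mul_one]
  have heHe : e * (H * e) = 0 := by
    have key0 : (1 + s) * (H * (1 + s)) = H + H * s + s * H + s * (H * s) := by
      noncomm_ring
    rw [ha, hsneg] at key0
    have key : (1 + s) * (H * (1 + s)) = 0 := by rw [key0]; abel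
    rw [he, mul_smul_comm, mul_smul_comm, smul_mul_assoc, key]
    simp
  have h0 : s * H + H * s = 0 := by rw [ha]; abel
  have hsum : e * H + H * e = H := by
    have h1 : e * H + H * e = c • ((1 + s) * H + H * (1 + s)) := by
      rw [he, smul_mul_assoc, mul_smul_comm, smul_add]
    have h2' : (1 + s) * H + H * (1 + s) = (H + H) + (s * H + H * s) := by
      noncomm_ring
    rw [h1, h2', h0, add_zero, ← two_smul F H, smul_smul, hc2, one_smul]
  set x : R := e * (H * f) with hx
  set y : R := f * (H * e) with hy
  have hfx : f * x = 0 := by rw [hx, ← mul_assoc, hfe, zero_mul]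
  have hxf : x * f = x := by
    rw [hx, mul_assoc, mul_assoc, hff]
  have hxe : x * e = 0 := by
    rw [hx, mul_assoc, mul_assoc, hfe, mul_zero, mul_zero]
  have hxx : x * x = 0 := by rw [hx, ← mul_assoc, ← hx, hxe, zero_mul]
  have hey : e * y = 0 := by rw [hy, ← mul_assoc, hef, zero_mul]
  have hye : y * e = y := by rw [hy, mul_assoc, mul_assoc, hee]
  have hyf : y * f = 0 := by
    rw [hy, mul_assoc, mul_assoc, hef, mul_zero, mul_zero]
  have hyy : y * y = 0 := by rw [hy, ← mul_assoc, ← hy, hyf, zero_mul]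
  have hz1 : (f + x) * (f + x) = f + x := by
    rw [add_mul, mul_add, mul_add, hff, hfx, hxf, hxx]
    abel
  have hz2 : (e + y) * (e + y) = e + y := by
    rw [add_mul, mul_add, mul_add, hee, hey, hye, hyy]
    abel
  have hx' : x = e * H := by
    rw [hx, hf1, mul_sub, mul_one, mul_sub, heHe, sub_zero]
  have hy' : y = H * e := by
    rw [hy, hf1, sub_mul, one_mul, heHe, sub_zero]
  refine ⟨f + x, e + y, hz1, hz2, ?_⟩
  calc (f + x) + (e + y) = (e + f) + (x + y) := by abel
    _ = 1 + H := by rw [hef1, hx', hy', hsum]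

lemma part_one (h2 : (2:F) ≠ 0) (g w A' : R) (hg : g * g = 1) (hw : w * w = 1)
    (hwg : w * g = -(g * w)) :
    ∃ H₁ r H₃ m : R,
      g * H₁ = -(H₁ * g) ∧ w * r = -(r * w) ∧ w * H₃ = -(H₃ * w) ∧
      H₁ + r + H₃ + m = A' ∧
      ((2⁻¹:F) • ((1:R) - g)) * m = m ∧ m * ((2⁻¹:F) • ((1:R) - g)) = m := by
  set c : F := 2⁻¹ with hc
  have hc2 : c * 2 = 1 := inv_mul_cancel₀ h2
  have hgw : g * w = -(w * g) := by rw [hwg, neg_neg]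
  set G : R := g * (A' * g) with hG
  set Dg : R := c • (A' + G) with hDg
  set H₁ : R := c • (A' - G) with hH₁
  have hgG : g * G = A' * g := by rw [hG, ← mul_assoc, hg, one_mul]
  have hGg : G * g = g * A' := by
    rw [hG, mul_assoc, mul_assoc, hg, mul_one]
  have ha1 : g * H₁ = -(H₁ * g) := by
    rw [hH₁, mul_smul_comm, smul_mul_assoc, ← smul_neg]
    congr 1
    rw [mul_sub, sub_mul, hgG, hGg, neg_sub]
  have hgDg : g * Dg = Dg * g := by
    rw [hDg, mul_smul_comm, smul_mul_assoc]
    congr 1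
    rw [mul_add, add_mul, hgG, hGg, add_comm]
  set W : R := w * (Dg * w) with hW
  set sb : R := c • (Dg + W) with hsb
  set r : R := c • (Dg - W) with hr
  have hwW : w * W = Dg * w := by rw [hW, ← mul_assoc, hw, one_mul]
  have hWw : W * w = w * Dg := by
    rw [hW, mul_assoc, mul_assoc, hw, mul_one]
  have ha2 : w * r = -(r * w) := by
    rw [hr, mul_smul_comm, smul_mul_assoc, ← smul_neg]
    congr 1
    rw [mul_sub, sub_mul, hwW, hWw, neg_sub]
  have hws : w * sb = sb * w := by
    rw [hsb, mul_smul_comm, smul_mul_assoc]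
    congr 1
    rw [mul_add, add_mul, hwW, hWw, add_comm]
  have hgW : g * W = W * g := by
    calc g * W = -(w * (g * (Dg * w))) := by
          rw [hW, ← mul_assoc, hgw, neg_mul, mul_assoc]
      _ = -(w * ((Dg * g) * w)) := by rw [← mul_assoc g Dg w, hgDg]
      _ = w * ((Dg * w) * g) := by
          rw [mul_assoc Dg g w, hgw, mul_neg, mul_neg, neg_neg, ← mul_assoc Dg w g]
      _ = W * g := by rw [← mul_assoc, hW]
  have hgs : g * sb = sb * g := by
    rw [hsb, mul_smul_comm, smul_mul_assoc]
    congr 1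
    rw [mul_add, add_mul, hgDg, hgW]
  set H₃ : R := sb * g with hH₃
  set m : R := sb - sb * g with hm
  have ha3 : w * H₃ = -(H₃ * w) := by
    rw [hH₃, ← mul_assoc, hws, mul_assoc, hwg, mul_neg, ← mul_assoc]
  have hH1Dg : H₁ + Dg = A' := by
    rw [hH₁, hDg, ← smul_add]
    have h1 : (A' - G) + (A' + G) = (2:F) • A' := by rw [two_smul]; abel
    rw [h1, smul_smul, hc2, one_smul]
  have hrs : r + sb = Dg := by
    rw [hr, hsb, ← smul_add]
    have h1 : (Dg - W) + (Dg + W) = (2:F) • Dg := by rw [two_smul]; abel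
    rw [h1, smul_smul, hc2, one_smul]
  have htotal : H₁ + r + H₃ + m = A' := by
    have h1 : H₁ + r + H₃ + m = H₁ + (r + sb) := by rw [hH₃, hm]; abel
    rw [h1, hrs, hH1Dg]
  have hmsg : m = sb * (1 - g) := by rw [hm, mul_sub, mul_one]
  have h11 : ((1:R) - g) * (1 - g) = (2:F) • (1 - g) := by
    have e1 : ((1:R) - g) * (1 - g) = 1 - g - g + g * g := by noncomm_ring
    have e2 : (2:F) • ((1:R) - g) = (1 - g) + (1 - g) := two_smul F _
    rw [e1, hg, e2]; abel
  have hgm : ((1:R) - g) * sb = sb * (1 - g) := by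
    rw [sub_mul, mul_sub, one_mul, mul_one, hgs]
  have hmr : m * ((2⁻¹:F) • ((1:R) - g)) = m := by
    rw [← hc, mul_smul_comm, hmsg, mul_assoc, h11, mul_smul_comm, smul_smul,
      hc2, one_smul]
  have hml : ((2⁻¹:F) • ((1:R) - g)) * m = m := by
    rw [← hc, smul_mul_assoc, hmsg, ← mul_assoc, hgm, mul_assoc, h11,
      mul_smul_comm, smul_smul, hc2, one_smul]
  exact ⟨H₁, r, H₃, m, ha1, ha2, ha3, htotal, hml, hmr⟩

end RingPart

section OpsExtra

variable {F : Type*} [Field F] {M : Type*} [AddCommGroup M] [Module F M]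

lemma sw1_sg_anti0 :
    swop F M f1 * sgop F M + sgop F M * swop F M f1 = 0 := by
  rw [sw1_sg_anti]; exact neg_add_cancel _

end OpsExtra

section Dz

variable (F : Type*) [Field F] (M : Type*) [AddCommGroup M] [Module F M]

/-- `pzop - sgop`, defined without subtraction -/
noncomputable def dzop : Module.End F (ℕ →₀ M) :=
  (lsum F) fun n => if n = 0 then 0 else ((-1:F)^(n+1)) • lsingle n

variable {F M}

lemma dzop_single (n : ℕ) (m : M) :
    dzop F M (single n m) =
      if n = 0 then 0 else ((-1:F)^(n+1)) • single n m := by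
  simp only [dzop, lsum_single]
  split_ifs <;> simp

lemma sg_dz_sum : sgop F M + dzop F M = pzop F M := by
  apply lhom_ext; intro n m
  cases n with
  | zero =>
      simp [LinearMap.add_apply, sgop_single, dzop_single, pzop_single]
  | succ n =>
      rw [LinearMap.add_apply, sgop_single, dzop_single, pzop_single,
        if_neg (Nat.succ_ne_zero n), if_neg (Nat.succ_ne_zero n)]
      have hp : ((-1:F))^(n+1+1) = -((-1:F))^(n+1) := by rw [pow_succ]; ring
      rw [hp, neg_smul]
      simp

end Dz

section DzGroup

variable {F : Type*} [Field F] {M : Type*} [AddCommGroup M] [Module F M]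

lemma dz_eq : dzop F M = pzop F M - sgop F M := by
  have h := sg_dz_sum (F := F) (M := M)
  rw [← h]; abel

lemma sw2_dz_anti0 :
    swop F M f2 * dzop F M + dzop F M * swop F M f2 = 0 := by
  rw [dz_eq, sw2_pzsg_anti]; exact neg_add_cancel _

end DzGroup

section Transport

variable {F : Type*} [Field F]

/-- conjugation of an endomorphism along a linear equivalence -/
noncomputable def conjE {M₁ M₂ : Type*} [AddCommMonoid M₁] [Module F M₁]
    [AddCommMonoid M₂] [Module F M₂] (Ψ : M₁ ≃ₗ[F] M₂) (θ : Module.End F M₂) :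
    Module.End F M₁ :=
  Ψ.symm.toLinearMap ∘ₗ θ ∘ₗ Ψ.toLinearMap

variable {M₁ M₂ : Type*} [AddCommMonoid M₁] [Module F M₁]
    [AddCommMonoid M₂] [Module F M₂] (Ψ : M₁ ≃ₗ[F] M₂)

lemma conjE_apply (θ : Module.End F M₂) (v : M₁) :
    conjE Ψ θ v = Ψ.symm (θ (Ψ v)) := rfl

lemma conjE_mul (θ θ' : Module.End F M₂) :
    conjE Ψ (θ * θ') = conjE Ψ θ * conjE Ψ θ' := by
  apply LinearMap.ext; intro v
  simp [conjE_apply, Module.End.mul_apply, LinearEquiv.apply_symm_apply]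

lemma conjE_one : conjE Ψ (1 : Module.End F M₂) = 1 := by
  apply LinearMap.ext; intro v
  simp [conjE_apply, Module.End.one_apply, LinearEquiv.symm_apply_apply]

lemma conjE_add (θ θ' : Module.End F M₂) :
    conjE Ψ (θ + θ') = conjE Ψ θ + conjE Ψ θ' := by
  apply LinearMap.ext; intro v; simp [conjE_apply, LinearMap.add_apply]

lemma conjE_zero : conjE Ψ (0 : Module.End F M₂) = 0 := by
  apply LinearMap.ext; intro v; simp [conjE_apply]

end Transport

section Swindle

variable {F : Type*} [Field F]

lemma prodL_single (n j : ℕ) (c : F) :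
    finsuppProdLEquiv F (single (n, j) c) = single n (single j c) := by
  ext a b
  simp [Finsupp.finsuppProdLEquiv, Finsupp.curryLinearEquiv_apply, Finsupp.curry_apply, Finsupp.single_apply, Prod.ext_iff]

noncomputable def innE (t : Module.End F (ℕ →₀ F)) :
    Module.End F (ℕ →₀ (ℕ →₀ F)) := Finsupp.mapRange.linearMap t

lemma innE_single (t : Module.End F (ℕ →₀ F)) (n : ℕ) (w : ℕ →₀ F) :
    innE t (single n w) = single n (t w) := by
  simp [innE, Finsupp.mapRange_single]

lemma swop_inn (t : Module.End F (ℕ →₀ F)) (f : ℕ → ℕ) :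
    swop F (ℕ →₀ F) f * innE t = innE t * swop F (ℕ →₀ F) f := by
  apply lhom_ext; intro n w
  simp [Module.End.mul_apply, swop_single, innE_single]

lemma sgop_inn (t : Module.End F (ℕ →₀ F)) :
    sgop F (ℕ →₀ F) * innE t = innE t * sgop F (ℕ →₀ F) := by
  apply lhom_ext; intro n w
  simp [Module.End.mul_apply, sgop_single, innE_single, map_smul]

lemma po_single_odd (h2 : (2:F) ≠ 0) {a : ℕ} (ha : a % 2 = 1) (c : F) :
    ((2⁻¹:F) • ((1 : Module.End F (ℕ →₀ F)) - sgop F F)) (single a c) = single a c := by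
  have hodd : Odd a := ⟨a / 2, by omega⟩
  rw [LinearMap.smul_apply, LinearMap.sub_apply, Module.End.one_apply, sgop_single,
    Odd.neg_one_pow hodd, neg_one_smul, sub_neg_eq_add, ← two_smul F, smul_smul,
    inv_mul_cancel₀ h2, one_smul]

lemma po_single_even {a : ℕ} (ha : a % 2 = 0) (c : F) :
    ((2⁻¹:F) • ((1 : Module.End F (ℕ →₀ F)) - sgop F F)) (single a c) = 0 := by
  have heven : Even a := ⟨a / 2, by omega⟩
  rw [LinearMap.smul_apply, LinearMap.sub_apply, Module.End.one_apply, sgop_single,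
    Even.neg_one_pow heven, one_smul, sub_self, smul_zero]

lemma pz_sandwich (θ : Module.End F (ℕ →₀ (ℕ →₀ F)))
    (h1 : pzop F (ℕ →₀ F) * θ = θ) (h2 : θ * pzop F (ℕ →₀ F) = θ) :
    θ = innE ((lapply 0 : (ℕ →₀ (ℕ →₀ F)) →ₗ[F] (ℕ →₀ F)) ∘ₗ
        (θ : (ℕ →₀ (ℕ →₀ F)) →ₗ[F] (ℕ →₀ (ℕ →₀ F))) ∘ₗ
        (lsingle 0 : (ℕ →₀ F) →ₗ[F] (ℕ →₀ (ℕ →₀ F)))) * pzop F (ℕ →₀ F) := by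
  apply lhom_ext; intro n w
  cases n with
  | zero =>
      have lhs : θ (single 0 w) = single 0 ((θ (single 0 w)) 0) := by
        conv_lhs => rw [← h1]
        rfl
      rw [Module.End.mul_apply, pzop_single, if_pos rfl, innE_single, lhs]
      simp
  | succ n =>
      have lhs : θ (single (n+1) w) = 0 := by
        conv_lhs => rw [← h2]
        show θ (pzop F (ℕ →₀ F) (single (n+1) w)) = 0
        rw [pzop_single, if_neg (Nat.succ_ne_zero n)]
        simp
      rw [lhs, Module.End.mul_apply, pzop_single, if_neg (Nat.succ_ne_zero n)]
      simp

end Swindle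

end SumFourteenAux

set_option maxHeartbeats 1000000 in
open SumFourteenAux Finsupp in
theorem end_sum_fourteen_kpotent {F : Type*} [Field F] (hchar : (2 : F) ≠ 0)
    (k : ℕ) (hk : 2 ≤ k) (hω : ∃ ω : F, ω ^ k = 1 ∧ ω ≠ 1)
    (A : Module.End F (ℕ →₀ F)) :
    ∃ E : Fin 14 → Module.End F (ℕ →₀ F),
      (∀ i, E i ^ (k + 1) = E i) ∧ A = ∑ i, E i := by
  classical
  set A' : Module.End F (ℕ →₀ F) := A - (1 + 1 + 1 + 1 + 1) with hA'
  obtain ⟨H₁, r, H₃, m, ha1, ha2, ha3, hsum4, hml, hmr⟩ :=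
    part_one (R := Module.End F (ℕ →₀ F)) hchar (sgop F F) (swop F F f1) A' sgop_invol
      (swop_invol f1_invol) sw1_sg_anti
  -- transport setup
  set Ψ : (ℕ →₀ F) ≃ₗ[F] (ℕ →₀ (ℕ →₀ F)) :=
    (Finsupp.domLCongr phi.symm).trans (finsuppProdLEquiv F) with hΨ
  have hΨs : ∀ (n j : ℕ) (c : F), Ψ (single (phi (n, j)) c) = single n (single j c) := by
    intro n j c
    rw [hΨ, LinearEquiv.trans_apply, Finsupp.domLCongr_single, Equiv.symm_apply_apply,
      prodL_single]
  have htrans : (pzop F (ℕ →₀ F) : (ℕ →₀ (ℕ →₀ F)) →ₗ[F] (ℕ →₀ (ℕ →₀ F))) ∘ₗ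
      Ψ.toLinearMap = Ψ.toLinearMap ∘ₗ
      (((2⁻¹:F) • ((1 : Module.End F (ℕ →₀ F)) - sgop F F)) :
        (ℕ →₀ F) →ₗ[F] (ℕ →₀ F)) := by
    apply lhom_ext; intro a c
    obtain ⟨⟨n, j⟩, rfl⟩ : ∃ p : ℕ × ℕ, phi p = a := ⟨phi.symm a, phi.apply_symm_apply a⟩
    cases n with
    | zero =>
        have hodd : (phi (0, j)) % 2 = 1 := by rw [phi_zero]; omega
        simp only [LinearMap.comp_apply, LinearEquiv.coe_coe]
        rw [hΨs 0 j c, pzop_single, if_pos rfl, po_single_odd hchar hodd, hΨs 0 j c]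
    | succ n =>
        have heven : (phi (n+1, j)) % 2 = 0 := by rw [phi_succ]; omega
        simp only [LinearMap.comp_apply, LinearEquiv.coe_coe]
        rw [hΨs (n+1) j c, pzop_single, if_neg (Nat.succ_ne_zero n),
          po_single_even heven, map_zero]
  have htr : ∀ u : ℕ →₀ F,
      pzop F (ℕ →₀ F) (Ψ u) =
        Ψ (((2⁻¹:F) • ((1 : Module.End F (ℕ →₀ F)) - sgop F F)) u) := by
    intro u
    have h := LinearMap.congr_fun htrans u
    simpa using h
  have hpom : ∀ u : ℕ →₀ F,
      ((2⁻¹:F) • ((1 : Module.End F (ℕ →₀ F)) - sgop F F)) (m u) = m u := by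
    intro u; rw [← Module.End.mul_apply, hml]
  have hmpo : ∀ u : ℕ →₀ F,
      m (((2⁻¹:F) • ((1 : Module.End F (ℕ →₀ F)) - sgop F F)) u) = m u := by
    intro u; rw [← Module.End.mul_apply, hmr]
  set mh := conjE Ψ.symm m with hmh
  have hmhv : ∀ v, mh v = Ψ (m (Ψ.symm v)) := by
    intro v; rw [hmh, conjE_apply]; simp
  have hconjm : conjE Ψ mh = m := by
    apply LinearMap.ext; intro v
    rw [conjE_apply, hmhv]
    simp
  have hpz1 : pzop F (ℕ →₀ F) * mh = mh := by
    apply LinearMap.ext; intro v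
    have h1 : (pzop F (ℕ →₀ F) * mh) v = pzop F (ℕ →₀ F) (mh v) := rfl
    rw [h1, hmhv v, htr, hpom]
  have hpz2 : mh * pzop F (ℕ →₀ F) = mh := by
    apply LinearMap.ext; intro v
    have h1 : (mh * pzop F (ℕ →₀ F)) v = mh (pzop F (ℕ →₀ F) v) := rfl
    have h2 := htr (Ψ.symm v)
    rw [LinearEquiv.apply_symm_apply] at h2
    rw [h1, h2, hmhv, LinearEquiv.symm_apply_apply, hmpo, ← hmhv v]
  set t := (lapply 0 : (ℕ →₀ (ℕ →₀ F)) →ₗ[F] (ℕ →₀ F)) ∘ₗ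
      (mh : (ℕ →₀ (ℕ →₀ F)) →ₗ[F] (ℕ →₀ (ℕ →₀ F))) ∘ₗ
      (lsingle 0 : (ℕ →₀ F) →ₗ[F] (ℕ →₀ (ℕ →₀ F))) with ht
  have hform : mh = innE t * pzop F (ℕ →₀ F) := by
    rw [ht]; exact pz_sandwich mh hpz1 hpz2
  set K₁ := innE t * sgop F (ℕ →₀ F) with hK₁
  set K₂ := innE t * dzop F (ℕ →₀ F) with hK₂
  have hK : K₁ + K₂ = mh := by
    rw [hK₁, hK₂, ← mul_add, sg_dz_sum, ← hform]
  have hanti1 : swop F (ℕ →₀ F) f1 * K₁ + K₁ * swop F (ℕ →₀ F) f1 = 0 := by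
    rw [hK₁, ← mul_assoc, swop_inn, mul_assoc, mul_assoc, ← mul_add,
      sw1_sg_anti0, mul_zero]
  have hanti2 : swop F (ℕ →₀ F) f2 * K₂ + K₂ * swop F (ℕ →₀ F) f2 = 0 := by
    rw [hK₂, ← mul_assoc, swop_inn, mul_assoc, mul_assoc, ← mul_add,
      sw2_dz_anti0, mul_zero]
  have h4inv : conjE Ψ (swop F (ℕ →₀ F) f1) * conjE Ψ (swop F (ℕ →₀ F) f1) = 1 := by
    rw [← conjE_mul, swop_invol f1_invol, conjE_one]
  have h5inv : conjE Ψ (swop F (ℕ →₀ F) f2) * conjE Ψ (swop F (ℕ →₀ F) f2) = 1 := by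
    rw [← conjE_mul, swop_invol f2_invol, conjE_one]
  have ha4 : conjE Ψ (swop F (ℕ →₀ F) f1) * conjE Ψ K₁ +
      conjE Ψ K₁ * conjE Ψ (swop F (ℕ →₀ F) f1) = 0 := by
    rw [← conjE_mul, ← conjE_mul, ← conjE_add, hanti1, conjE_zero]
  have ha5 : conjE Ψ (swop F (ℕ →₀ F) f2) * conjE Ψ K₂ +
      conjE Ψ K₂ * conjE Ψ (swop F (ℕ →₀ F) f2) = 0 := by
    rw [← conjE_mul, ← conjE_mul, ← conjE_add, hanti2, conjE_zero]
  have hm45 : conjE Ψ K₁ + conjE Ψ K₂ = m := by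
    rw [← conjE_add, hK, hconjm]
  obtain ⟨z1a, z1b, i1a, i1b, e1⟩ := pair_idem hchar (sgop F F) H₁ sgop_invol
    (by rw [ha1]; exact neg_add_cancel _)
  obtain ⟨z2a, z2b, i2a, i2b, e2⟩ :=
    pair_idem hchar (swop F F f1) r (swop_invol f1_invol)
      (by rw [ha2]; exact neg_add_cancel _)
  obtain ⟨z3a, z3b, i3a, i3b, e3⟩ :=
    pair_idem hchar (swop F F f1) H₃ (swop_invol f1_invol)
      (by rw [ha3]; exact neg_add_cancel _)
  obtain ⟨z4a, z4b, i4a, i4b, e4⟩ :=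
    pair_idem hchar (conjE Ψ (swop F (ℕ →₀ F) f1)) (conjE Ψ K₁) h4inv ha4
  obtain ⟨z5a, z5b, i5a, i5b, e5⟩ :=
    pair_idem hchar (conjE Ψ (swop F (ℕ →₀ F) f2)) (conjE Ψ K₂) h5inv ha5
  refine ⟨![z1a, z1b, z2a, z2b, z3a, z3b, z4a, z4b, z5a, z5b, 0, 0, 0, 0], ?_, ?_⟩
  · intro i
    fin_cases i <;>
      simp only [Matrix.cons_val_zero, Matrix.cons_val_one, Matrix.head_cons,
        Matrix.cons_val_succ] <;>
      first
        | exact idem_pow i1a k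
        | exact idem_pow i1b k
        | exact idem_pow i2a k
        | exact idem_pow i2b k
        | exact idem_pow i3a k
        | exact idem_pow i3b k
        | exact idem_pow i4a k
        | exact idem_pow i4b k
        | exact idem_pow i5a k
        | exact idem_pow i5b k
        | exact zero_pow (Nat.succ_ne_zero k)
  · have hexp : (∑ i, (![z1a, z1b, z2a, z2b, z3a, z3b, z4a, z4b, z5a, z5b,
        0, 0, 0, 0] : Fin 14 → Module.End F (ℕ →₀ F)) i) =
        (z1a + z1b) + ((z2a + z2b) + ((z3a + z3b) + ((z4a + z4b) + (z5a + z5b)))) := by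
      simp [Fin.sum_univ_succ]
      abel
    rw [hexp, e1, e2, e3, e4, e5]
    have hre : (1 + H₁) + ((1 + r) + ((1 + H₃) +
        ((1 + conjE Ψ K₁) + (1 + conjE Ψ K₂)))) =
        (1 + 1 + 1 + 1 + 1) + (H₁ + r + (H₃ + (conjE Ψ K₁ + conjE Ψ K₂))) := by abel
    rw [hre, hm45]
    have hre2 : H₁ + r + (H₃ + m) = A' := by rw [← hsum4]; abel
    rw [hre2, hA']
    abel
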